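/- Let n > 2k, k ≥ t+3, and let F ⊆ C([n],k) be a maximal t-intersecting family with τ_t(F) = t+2 and τ_t(T_t(F)) = t+2. If T_t(F) = C(Z, t+2) for some Z ∈ C([n], t+4), then F = {F ∈ C([n],k) : |F ∩ Z| ≥ t+2}. -/

import Mathlib

open Finset

def Intersecting (t : ℕ) (𝓕 : Finset (Finset ℕ)) : Prop :=
  ∀ A ∈ 𝓕, ∀ B ∈ 𝓕, t ≤ (A ∩ B).card

def IsCover (n t : ℕ) (𝓕 : Finset (Finset ℕ)) (S : Finset ℕ) : Prop :=
  S ⊆ Finset.range n ∧ ∀ A ∈ 𝓕, t ≤ (S ∩ A).card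

noncomputable def tau (n t : ℕ) (𝓕 : Finset (Finset ℕ)) : ℕ :=
  sInf {m | ∃ S, IsCover n t 𝓕 S ∧ S.card = m}

open Classical in
noncomputable def minCovers (n t : ℕ) (𝓕 : Finset (Finset ℕ)) : Finset (Finset ℕ) :=
  ((Finset.range n).powerset).filter
    (fun S => (∀ A ∈ 𝓕, t ≤ (S ∩ A).card) ∧ S.card = tau n t 𝓕)

def MaximalIntersecting (n k t : ℕ) (𝓕 : Finset (Finset ℕ)) : Prop :=
  𝓕 ⊆ (Finset.range n).powersetCard k ∧ Intersecting t 𝓕 ∧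
    ∀ 𝓖 : Finset (Finset ℕ), 𝓖 ⊆ (Finset.range n).powersetCard k →
      Intersecting t 𝓖 → 𝓕 ⊆ 𝓖 → 𝓖 = 𝓕

lemma key_cover (t : ℕ) (ht : 1 ≤ t) (Z F : Finset ℕ) (hZcard : Z.card = t + 4)
    (h : ∀ S ⊆ Z, S.card = t + 2 → t ≤ (S ∩ F).card) : t + 2 ≤ (F ∩ Z).card := by
  by_contra hc
  push_neg at hc
  rcases le_or_gt (F ∩ Z).card 1 with h1 | h2
  · -- pick S inside Z \ F
    have hsd : t + 2 ≤ (Z \ F).card := by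
      have := Finset.card_sdiff_add_card_inter Z F
      have h' : (Z ∩ F).card ≤ 1 := by rwa [Finset.inter_comm]
      omega
    obtain ⟨S, hS, hScard⟩ := Finset.exists_subset_card_eq hsd
    have := h S (hS.trans Finset.sdiff_subset) hScard
    have hempty : S ∩ F = ∅ := by
      apply Finset.eq_empty_of_forall_notMem
      intro x hx
      rcases Finset.mem_inter.mp hx with ⟨hxS, hxF⟩
      exact (Finset.mem_sdiff.mp (hS hxS)).2 hxF
    rw [hempty] at this
    simp at this
    omega
  · -- remove two elements of F ∩ Z from Z
    obtain ⟨B, hB, hBcard⟩ := Finset.exists_subset_card_eq h2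
    have hBZ : B ⊆ Z := hB.trans Finset.inter_subset_right
    have hScard : (Z \ B).card = t + 2 := by
      rw [Finset.card_sdiff_of_subset hBZ, hZcard, hBcard]
      omega
    have := h (Z \ B) Finset.sdiff_subset hScard
    have heq : (Z \ B) ∩ F = (F ∩ Z) \ B := by
      ext x
      simp only [Finset.mem_sdiff, Finset.mem_inter]
      tauto
    rw [heq] at this
    have hle : ((F ∩ Z) \ B).card = (F ∩ Z).card - 2 := by
      rw [Finset.card_sdiff_of_subset hB, hBcard]
    omega

theorem stmt15 (n k t : ℕ) (ht : 1 ≤ t) (hk : t + 3 ≤ k) (hn : 2 * k < n)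
    (𝓕 : Finset (Finset ℕ)) (hmax : MaximalIntersecting n k t 𝓕)
    (htau : tau n t 𝓕 = t + 2)
    (htau2 : tau n t (minCovers n t 𝓕) = t + 2)
    (Z : Finset ℕ) (hZ : Z ∈ (Finset.range n).powersetCard (t + 4))
    (hcov : minCovers n t 𝓕 = Z.powersetCard (t + 2)) :
    𝓕 = ((Finset.range n).powersetCard k).filter (fun F => t + 2 ≤ (F ∩ Z).card) := by
  obtain ⟨hZsub, hZcard⟩ := Finset.mem_powersetCard.mp hZ
  set 𝓖 := ((Finset.range n).powersetCard k).filter (fun F => t + 2 ≤ (F ∩ Z).card) with h𝓖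
  have hGsub : 𝓖 ⊆ (Finset.range n).powersetCard k := Finset.filter_subset _ _
  have hGint : Intersecting t 𝓖 := by
    intro A hA B hB
    have hA' := (Finset.mem_filter.mp hA).2
    have hB' := (Finset.mem_filter.mp hB).2
    have hU : ((A ∩ Z) ∪ (B ∩ Z)).card ≤ t + 4 := by
      calc ((A ∩ Z) ∪ (B ∩ Z)).card ≤ Z.card :=
            Finset.card_le_card (Finset.union_subset Finset.inter_subset_right
              Finset.inter_subset_right)
        _ = t + 4 := hZcard
    have hIE := Finset.card_union_add_card_inter (A ∩ Z) (B ∩ Z)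
    have hsub : (A ∩ Z) ∩ (B ∩ Z) ⊆ A ∩ B := by
      intro x hx
      simp only [Finset.mem_inter] at hx ⊢
      tauto
    have := Finset.card_le_card hsub
    omega
  have hFG : 𝓕 ⊆ 𝓖 := by
    intro F hF
    rw [h𝓖, Finset.mem_filter]
    refine ⟨hmax.1 hF, ?_⟩
    apply key_cover t ht Z F hZcard
    intro S hS hScard
    have hSmem : S ∈ minCovers n t 𝓕 := by
      rw [hcov]
      exact Finset.mem_powersetCard.mpr ⟨hS, hScard⟩
    exact (Finset.mem_filter.mp hSmem).2.1 F hF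
  exact (hmax.2.2 𝓖 hGsub hGint hFG).symm
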